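/- For every formula-based program P and every countable ordinal α, the immediate consequence operator T_P is α-monotonic: for all interpretations I and J, I ⊑_α J implies T_P(I) ⊑_α T_P(J). -/

import Mathlib

/-!
Infinite-valued semantics for formula-based logic programs
(Rondogiannis–Wadge style), following Lüdecke,
"Every Formula-Based Logic Program Has a Least Infinite-Valued Model".
-/

noncomputable section

namespace ILP

attribute [local instance] Classical.propDecidable

/-- The first uncountable ordinal. -/
def omega1 : Ordinal.{0} := Ordinal.omega 1

lemma omega1_isLimit : Order.IsSuccLimit omega1 := Cardinal.isSuccLimit_omega 1

lemma zero_lt_omega1 : (0 : Ordinal) < omega1 := omega1_isLimit.pos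

lemma succ_lt_omega1 {a : Ordinal} (h : a < omega1) : a + 1 < omega1 := by
  rw [Ordinal.add_one_eq_succ]
  exact omega1_isLimit.succ_lt h

/-- Pre-truth-values: `F α`, `0`, `T α` for arbitrary ordinals `α`. -/
inductive TVPre : Type 1 where
  | F : Ordinal → TVPre
  | zero : TVPre
  | T : Ordinal → TVPre

/-- A pre-truth-value is countable if its index is a countable ordinal. -/
def TVPre.countable : TVPre → Prop
  | .F a => a < omega1
  | .zero => True
  | .T a => a < omega1

/-- The set `W` of truth values:
`F_α` (false values) for countable `α`, `0`, and `T_α` (true values) for countable `α`. -/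
def W : Type 1 := {v : TVPre // v.countable}

/-- The strict order on truth values:
`F_0 < F_1 < ... < 0 < ... < T_1 < T_0`. -/
def TVPre.lt : TVPre → TVPre → Prop
  | .F a, .F b => a < b
  | .F _, .zero => True
  | .F _, .T _ => True
  | .zero, .T _ => True
  | .T a, .T b => b < a
  | _, _ => False

instance : LT W := ⟨fun x y => TVPre.lt x.1 y.1⟩

instance : LE W := ⟨fun x y => x = y ∨ x < y⟩

lemma TVPre.lt_trans {a b c : TVPre} (hab : a.lt b) (hbc : b.lt c) : a.lt c := by
  cases a <;> cases b <;> cases c <;> simp_all [TVPre.lt] <;>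
    first | exact hab.trans hbc | exact hbc.trans hab

lemma TVPre.lt_irrefl {a : TVPre} (h : a.lt a) : False := by
  cases a <;> simp_all [TVPre.lt]

instance instLinearOrderW : LinearOrder W where
  le_refl a := Or.inl rfl
  le_trans a b c hab hbc := by
    rcases hab with rfl | hab
    · exact hbc
    rcases hbc with rfl | hbc
    · exact Or.inr hab
    · exact Or.inr (TVPre.lt_trans hab hbc)
  le_antisymm a b hab hba := by
    rcases hab with rfl | hab
    · rfl
    rcases hba with rfl | hba
    · rfl
    exact absurd (TVPre.lt_trans hab hba) TVPre.lt_irrefl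
  le_total a b := by
    obtain ⟨a1, ha⟩ := a
    obtain ⟨b1, hb⟩ := b
    have tri : a1 = b1 ∨ a1.lt b1 ∨ b1.lt a1 := by
      cases a1 <;> cases b1 <;> simp [TVPre.lt] <;> (try rename_i x y) <;>
        (try rcases lt_trichotomy x y with h | h | h) <;> tauto
    rcases tri with h | h | h
    · exact Or.inl (Or.inl (Subtype.ext h))
    · exact Or.inl (Or.inr h)
    · exact Or.inr (Or.inr h)
  lt_iff_le_not_ge a b := by
    constructor
    · intro h
      refine ⟨Or.inr h, ?_⟩
      rintro (rfl | h')
      · exact TVPre.lt_irrefl h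
      · exact TVPre.lt_irrefl (TVPre.lt_trans h h')
    · rintro ⟨rfl | h, h2⟩
      · exact absurd (Or.inl rfl) h2
      · exact h
  toDecidableLE := Classical.decRel _

/-- The false value `F_α`. -/
def WF (a : Ordinal) (h : a < omega1) : W := ⟨.F a, h⟩

/-- The true value `T_α`. -/
def WT (a : Ordinal) (h : a < omega1) : W := ⟨.T a, h⟩

/-- The undefined value `0`. -/
def WZ : W := ⟨.zero, trivial⟩

/-- `deg w < α` : the degree of `w` (which is `∞` for `0`) is less than `α`. -/
def degLT (w : W) (α : Ordinal) : Prop :=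
  match w.1 with
  | .F a => a < α
  | .zero => False
  | .T a => a < α

/-- The set of indices of true values occurring in `M`. -/
def TIdx (M : Set W) : Set Ordinal := {a | ∃ w ∈ M, w.1 = TVPre.T a}

/-- The set of indices of false values occurring in `M`. -/
def FIdx (M : Set W) : Set Ordinal := {a | ∃ w ∈ M, w.1 = TVPre.F a}

lemma mem_lt_omega1_of_TIdx {M : Set W} {a : Ordinal} (h : a ∈ TIdx M) : a < omega1 := by
  obtain ⟨w, _, hw⟩ := h
  have := w.2
  rw [hw] at this
  exact this

lemma mem_lt_omega1_of_FIdx {M : Set W} {a : Ordinal} (h : a ∈ FIdx M) : a < omega1 := by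
  obtain ⟨w, _, hw⟩ := h
  have := w.2
  rw [hw] at this
  exact this

/-- The least upper bound of a subset of `W`. -/
def Wsup (M : Set W) : W :=
  if h : (TIdx M).Nonempty then
    WT (sInf (TIdx M))
      (lt_of_le_of_lt (csInf_le' h.choose_spec) (mem_lt_omega1_of_TIdx h.choose_spec))
  else if WZ ∈ M then WZ
  else if h2 : sSup (FIdx M) < omega1 then WF (sSup (FIdx M)) h2
  else WZ

/-- The greatest lower bound of a subset of `W`. -/
def Winf (M : Set W) : W :=
  if h : (FIdx M).Nonempty then
    WF (sInf (FIdx M))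
      (lt_of_le_of_lt (csInf_le' h.choose_spec) (mem_lt_omega1_of_FIdx h.choose_spec))
  else if WZ ∈ M then WZ
  else if h2 : sSup (TIdx M) < omega1 then WT (sSup (TIdx M)) h2
  else WZ

/-- The semantics of negation on `W`. -/
def Wneg : W → W
  | ⟨.F a, h⟩ => WT (a + 1) (succ_lt_omega1 h)
  | ⟨.zero, _⟩ => WZ
  | ⟨.T a, h⟩ => WF (a + 1) (succ_lt_omega1 h)

/-! ### Syntax -/

/-- A first-order language with finitely many predicate symbols (at least one),
finitely many function symbols and finitely many constants (at least one). -/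
structure Language where
  nPred : ℕ
  predAr : Fin nPred → ℕ
  nFun : ℕ
  funAr : Fin nFun → ℕ
  nConst : ℕ
  npos : 1 ≤ nPred
  cpos : 1 ≤ nConst

variable {L : Language}

/-- Terms of the language; variables are indexed by natural numbers. -/
inductive Term (L : Language) : Type where
  | var : ℕ → Term L
  | const : Fin L.nConst → Term L
  | func : (f : Fin L.nFun) → (Fin (L.funAr f) → Term L) → Term L

/-- A term is ground if it contains no variables. -/
def Term.ground : Term L → Prop
  | .var _ => False
  | .const _ => True
  | .func _ ts => ∀ i, (ts i).ground

/-- The Herbrand universe: the set of ground terms. -/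
def HU (L : Language) : Type := {t : Term L // t.ground}

/-- Formulas of the language. -/
inductive Formula (L : Language) : Type where
  | verum : Formula L
  | falsum : Formula L
  | atom : (p : Fin L.nPred) → (Fin (L.predAr p) → Term L) → Formula L
  | neg : Formula L → Formula L
  | conj : Formula L → Formula L → Formula L
  | disj : Formula L → Formula L → Formula L
  | all : ℕ → Formula L → Formula L
  | ex : ℕ → Formula L → Formula L

/-- A ground atom: a predicate symbol applied to ground terms.
The Herbrand base `H_B` is the type of ground atoms. -/
structure GroundAtom (L : Language) : Type where
  pred : Fin L.nPred
  args : Fin (L.predAr pred) → HU L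

/-- An (infinite-valued Herbrand) interpretation. -/
def Interp (L : Language) : Type 1 := GroundAtom L → W

/-- Evaluation of a term under a variable assignment. -/
def Term.evalT (h : ℕ → HU L) : Term L → HU L
  | .var n => h n
  | .const c => ⟨.const c, trivial⟩
  | .func f ts => ⟨.func f fun i => ((ts i).evalT h).1, fun i => ((ts i).evalT h).2⟩

/-- The infinite-valued semantics of formulas, relative to an interpretation and
a variable assignment. -/
def Formula.eval (I : Interp L) : Formula L → (ℕ → HU L) → W
  | .verum, _ => WT 0 zero_lt_omega1
  | .falsum, _ => WF 0 zero_lt_omega1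
  | .atom p ts, h => I ⟨p, fun i => (ts i).evalT h⟩
  | .neg φ, h => Wneg (φ.eval I h)
  | .conj φ ψ, h => min (φ.eval I h) (ψ.eval I h)
  | .disj φ ψ, h => max (φ.eval I h) (ψ.eval I h)
  | .ex v φ, h => Wsup (Set.range fun u : HU L => φ.eval I (Function.update h v u))
  | .all v φ, h => Winf (Set.range fun u : HU L => φ.eval I (Function.update h v u))

/-- The variables occurring in a term. -/
def Term.vars : Term L → Set ℕ
  | .var n => {n}
  | .const _ => ∅
  | .func _ ts => ⋃ i, (ts i).vars

/-- The free variables of a formula. -/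
def Formula.freeVars : Formula L → Set ℕ
  | .verum => ∅
  | .falsum => ∅
  | .atom _ ts => ⋃ i, (ts i).vars
  | .neg φ => φ.freeVars
  | .conj φ ψ => φ.freeVars ∪ ψ.freeVars
  | .disj φ ψ => φ.freeVars ∪ ψ.freeVars
  | .all v φ => φ.freeVars \ {v}
  | .ex v φ => φ.freeVars \ {v}

/-- Applying a substitution to a term. -/
def Term.subst (σ : ℕ → Term L) : Term L → Term L
  | .var n => σ n
  | .const c => .const c
  | .func f ts => .func f fun i => (ts i).subst σ

/-- Applying a substitution to a formula (bound variables are not substituted). -/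
def Formula.subst (σ : ℕ → Term L) : Formula L → Formula L
  | .verum => .verum
  | .falsum => .falsum
  | .atom p ts => .atom p fun i => (ts i).subst σ
  | .neg φ => .neg (φ.subst σ)
  | .conj φ ψ => .conj (φ.subst σ) (ψ.subst σ)
  | .disj φ ψ => .disj (φ.subst σ) (ψ.subst σ)
  | .all v φ => .all v (φ.subst (Function.update σ v (Term.var v)))
  | .ex v φ => .ex v (φ.subst (Function.update σ v (Term.var v)))

/-- A formula-based rule `A ← φ`: the head is an atom `P(t₁,…,tₛ)`
(hence distinct from `⊤` and `⊥`) and the body is an arbitrary formula. -/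
structure Rule (L : Language) : Type where
  headPred : Fin L.nPred
  headArgs : Fin (L.predAr headPred) → Term L
  body : Formula L

/-- The head of a rule, as an atomic formula. -/
def Rule.headAtom (r : Rule L) : Formula L := .atom r.headPred r.headArgs

/-- A formula-based logic program: a finite set of formula-based rules. -/
structure Program (L : Language) : Type where
  rules : Set (Rule L)
  finite : rules.Finite

/-- The set `P_G` of ground instances of a program `P`: pairs `(Aσ, φσ)` obtained
from a rule `A ← φ` of `P` and a substitution `σ` such that `Aσ` is a ground atom
and `φσ` has no free variables. -/
def groundInstances (P : Program L) : Set (GroundAtom L × Formula L) :=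
  {Aφ | ∃ r ∈ P.rules, ∃ σ : ℕ → Term L,
    (∃ hg : ∀ i, ((r.headArgs i).subst σ).ground,
      Aφ.1 = ⟨r.headPred, fun i => ⟨(r.headArgs i).subst σ, hg i⟩⟩) ∧
    Aφ.2 = r.body.subst σ ∧ (r.body.subst σ).freeVars = ∅}

/-- A default variable assignment (possible since there is at least one constant). -/
def defaultAssignment (L : Language) : ℕ → HU L :=
  fun _ => ⟨.const ⟨0, L.cpos⟩, trivial⟩

/-- The value of a closed formula (independent of the variable assignment). -/
def Formula.evalClosed (I : Interp L) (φ : Formula L) : W :=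
  φ.eval I (defaultAssignment L)

/-- The immediate consequence operator `T_P`. -/
def TP (P : Program L) (I : Interp L) : Interp L :=
  fun A => Wsup {w | ∃ φ : Formula L, (A, φ) ∈ groundInstances P ∧ w = φ.evalClosed I}

/-- `I ∥ F_β` : the set of ground atoms receiving value `F_β` under `I`. -/
def Ifalse (I : Interp L) (β : Ordinal) : Set (GroundAtom L) := {A | (I A).1 = TVPre.F β}

/-- `I ∥ T_β` : the set of ground atoms receiving value `T_β` under `I`. -/
def Itrue (I : Interp L) (β : Ordinal) : Set (GroundAtom L) := {A | (I A).1 = TVPre.T β}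

/-- `I =_α J`. -/
def eqa (α : Ordinal) (I J : Interp L) : Prop :=
  ∀ β ≤ α, Ifalse I β = Ifalse J β ∧ Itrue I β = Itrue J β

/-- `I ⊑_α J`. -/
def sqa (α : Ordinal) (I J : Interp L) : Prop :=
  (∀ β < α, eqa β I J) ∧ Ifalse J α ⊆ Ifalse I α ∧ Itrue I α ⊆ Itrue J α

/-- `I ⊏_α J`. -/
def sqlt (α : Ordinal) (I J : Interp L) : Prop := sqa α I J ∧ ¬ eqa α I J

/-- `I ⊑_∞ J`. -/
def sqinf (I J : Interp L) : Prop := I = J ∨ ∃ α < omega1, sqlt α I J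

/-- `I` satisfies the rule `A ← φ`. -/
def satisfies (I : Interp L) (r : Rule L) : Prop :=
  ∀ h : ℕ → HU L, r.body.eval I h ≤ r.headAtom.eval I h

/-- `I` is a model of `P`. -/
def isModel (I : Interp L) (P : Program L) : Prop := ∀ r ∈ P.rules, satisfies I r

/-- The transfinite iterates `T^β_{P,α}(I)`. -/
def iter (P : Program L) (α : Ordinal) (hα : α < omega1) (I : Interp L)
    (β : Ordinal) : Interp L :=
  Ordinal.limitRecOn β I (fun _ J => TP P J)
    (fun β _ ih A =>
      if degLT (I A) α then I A
      else if ∃ γ, ∃ hγ : γ < β, (ih γ hγ A).1 = TVPre.T α then WT α hα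
      else if ∀ γ, ∀ hγ : γ < β, (ih γ hγ A).1 = TVPre.F α then WF α hα
      else WF (α + 1) (succ_lt_omega1 hα))

/-- The union `⊔_{γ<α} I_γ` of a family of interpretations. -/
def unionInterp (α : Ordinal) (hα : α < omega1) (Ig : ∀ γ, γ < α → Interp L) :
    Interp L := fun A =>
  if h : ∃ ζ, ∃ hζ : ζ < α, ((Ig ζ hζ) A).1 = TVPre.F ζ ∨ ((Ig ζ hζ) A).1 = TVPre.T ζ
  then Ig h.choose h.choose_spec.choose A
  else WF α hα

/-- The approximants `M_α` of a program `P`. -/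
def approx (P : Program L) (α : Ordinal) : Interp L :=
  if hα : α < omega1 then
    if (∀ γ, ∀ _ : γ < α, ∀ ζ, ζ < γ → eqa ζ (approx P ζ) (approx P γ)) ∧
        sqa α (unionInterp α hα fun γ _ => approx P γ)
          (TP P (unionInterp α hα fun γ _ => approx P γ))
    then iter P α hα (unionInterp α hα fun γ _ => approx P γ) omega1
    else fun _ => WF 0 zero_lt_omega1
  else fun _ => WF 0 zero_lt_omega1
termination_by α
decreasing_by
  all_goals first | assumption | exact lt_trans ‹_› ‹_›

/-- The depth `δ_P` of a program `P`. -/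
def depth (P : Program L) : Ordinal :=
  sInf {δ | δ < omega1 ∧ ∀ γ, δ ≤ γ → γ < omega1 →
    Ifalse (approx P γ) γ = ∅ ∧ Itrue (approx P γ) γ = ∅}

/-- The least infinite-valued model `M_P` of a program `P`. -/
def MP (P : Program L) : Interp L := fun A =>
  if degLT (approx P (depth P) A) (depth P) then approx P (depth P) A else WZ

/-! ### Three-valued semantics -/

/-- The three truth values `F < 0 < T`. -/
inductive TV3 : Type where
  | F : TV3
  | Z : TV3
  | T : TV3
deriving DecidableEq

/-- Numeric coding of the three truth values. -/
def TV3.toNat : TV3 → ℕ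
  | .F => 0
  | .Z => 1
  | .T => 2

instance : LinearOrder TV3 :=
  LinearOrder.lift' TV3.toNat (fun a b => by
    cases a <;> cases b <;> simp [TV3.toNat])

/-- A three-valued interpretation. -/
def Interp3 (L : Language) : Type := GroundAtom L → TV3

/-- Supremum of a set of three-valued truth values. -/
def sup3 (S : Set TV3) : TV3 :=
  if TV3.T ∈ S then .T else if TV3.Z ∈ S then .Z else .F

/-- Infimum of a set of three-valued truth values. -/
def inf3 (S : Set TV3) : TV3 :=
  if TV3.F ∈ S then .F else if TV3.Z ∈ S then .Z else .T

/-- Three-valued negation. -/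
def neg3 : TV3 → TV3
  | .F => .T
  | .Z => .Z
  | .T => .F

/-- The three-valued semantics of formulas. -/
def Formula.eval3 (K : Interp3 L) : Formula L → (ℕ → HU L) → TV3
  | .verum, _ => .T
  | .falsum, _ => .F
  | .atom p ts, h => K ⟨p, fun i => (ts i).evalT h⟩
  | .neg φ, h => neg3 (φ.eval3 K h)
  | .conj φ ψ, h => min (φ.eval3 K h) (ψ.eval3 K h)
  | .disj φ ψ, h => max (φ.eval3 K h) (ψ.eval3 K h)
  | .ex v φ, h => sup3 (Set.range fun u : HU L => φ.eval3 K (Function.update h v u))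
  | .all v φ, h => inf3 (Set.range fun u : HU L => φ.eval3 K (Function.update h v u))

/-- Collapsing all false values to `F` and all true values to `T`. -/
def collapse : W → TV3 := fun w =>
  match w.1 with
  | .F _ => .F
  | .zero => .Z
  | .T _ => .T

/-- The collapse of an infinite-valued interpretation. -/
def collapseI (I : Interp L) : Interp3 L := fun A => collapse (I A)

/-- `K` is a three-valued model of `P`. -/
def isModel3 (K : Interp3 L) (P : Program L) : Prop :=
  ∀ r ∈ P.rules, ∀ h : ℕ → HU L, r.body.eval3 K h ≤ r.headAtom.eval3 K h

/-- The three-valued interpretation `M_{P,3}`. -/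
def MP3 (P : Program L) : Interp3 L := collapseI (MP P)

/-- The negation degree of a formula. -/
def Formula.negDeg : Formula L → ℕ
  | .verum => 0
  | .falsum => 0
  | .atom _ _ => 0
  | .neg φ => φ.negDeg + 1
  | .conj φ ψ => max φ.negDeg ψ.negDeg
  | .disj φ ψ => max φ.negDeg ψ.negDeg
  | .all _ φ => φ.negDeg
  | .ex _ φ => φ.negDeg


/-! ### Auxiliary machinery for α-monotonicity -/

/-- `v ≤ F_β` : `v` is a false value of degree at most `β`. -/
def leF (v : W) (β : Ordinal) : Prop := ∃ γ ≤ β, v.1 = TVPre.F γ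

/-- `v ≥ T_β` : `v` is a true value of degree at most `β`. -/
def geT (v : W) (β : Ordinal) : Prop := ∃ γ ≤ β, v.1 = TVPre.T γ

/-- The pointwise relation underlying `⊑_α` on truth values. -/
def Rel (α : Ordinal) (v w : W) : Prop :=
  (∀ β ≤ α, leF w β → leF v β) ∧ (∀ β ≤ α, geT v β → geT w β) ∧
  (∀ β < α, leF v β → leF w β) ∧ (∀ β < α, geT w β → geT v β)

lemma Rel_refl {α : Ordinal} (v : W) : Rel α v v :=
  ⟨fun _ _ h => h, fun _ _ h => h, fun _ _ h => h, fun _ _ h => h⟩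

lemma leF_mono {a b : W} {β : Ordinal} (h : a ≤ b) (hb : leF b β) : leF a β := by
  obtain ⟨γ, hγ, hbγ⟩ := hb
  rcases h with rfl | hlt
  · exact ⟨γ, hγ, hbγ⟩
  · obtain ⟨a1, ha⟩ := a
    obtain ⟨b1, hbc⟩ := b
    simp only at hbγ
    subst hbγ
    cases a1 with
    | F δ => exact ⟨δ, le_of_lt (lt_of_lt_of_le hlt hγ), rfl⟩
    | zero => exact False.elim (hlt : False)
    | T δ => exact False.elim (hlt : False)

lemma geT_mono {a b : W} {β : Ordinal} (h : a ≤ b) (ha : geT a β) : geT b β := by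
  obtain ⟨γ, hγ, haγ⟩ := ha
  rcases h with rfl | hlt
  · exact ⟨γ, hγ, haγ⟩
  · obtain ⟨a1, hac⟩ := a
    obtain ⟨b1, hbc⟩ := b
    simp only at haγ
    subst haγ
    cases b1 with
    | F δ => exact False.elim (hlt : False)
    | zero => exact False.elim (hlt : False)
    | T δ => exact ⟨δ, le_of_lt (lt_of_lt_of_le hlt hγ), rfl⟩

lemma leF_min {a b : W} {β : Ordinal} : leF (min a b) β ↔ leF a β ∨ leF b β := by
  constructor
  · intro h
    rcases min_choice a b with hm | hm <;> rw [hm] at h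
    · exact Or.inl h
    · exact Or.inr h
  · rintro (h | h)
    · exact leF_mono (min_le_left a b) h
    · exact leF_mono (min_le_right a b) h

lemma geT_min {a b : W} {β : Ordinal} : geT (min a b) β ↔ geT a β ∧ geT b β := by
  constructor
  · intro h
    exact ⟨geT_mono (min_le_left a b) h, geT_mono (min_le_right a b) h⟩
  · rintro ⟨ha, hb⟩
    rcases min_choice a b with hm | hm <;> rw [hm]
    · exact ha
    · exact hb

lemma leF_max {a b : W} {β : Ordinal} : leF (max a b) β ↔ leF a β ∧ leF b β := by
  constructor
  · intro h
    exact ⟨leF_mono (le_max_left a b) h, leF_mono (le_max_right a b) h⟩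
  · rintro ⟨ha, hb⟩
    rcases max_choice a b with hm | hm <;> rw [hm]
    · exact ha
    · exact hb

lemma geT_max {a b : W} {β : Ordinal} : geT (max a b) β ↔ geT a β ∨ geT b β := by
  constructor
  · intro h
    rcases max_choice a b with hm | hm <;> rw [hm] at h
    · exact Or.inl h
    · exact Or.inr h
  · rintro (h | h)
    · exact geT_mono (le_max_left a b) h
    · exact geT_mono (le_max_right a b) h

lemma Rel_min {α : Ordinal} {v1 v2 w1 w2 : W} (h1 : Rel α v1 w1) (h2 : Rel α v2 w2) :
    Rel α (min v1 v2) (min w1 w2) := by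
  refine ⟨fun β hβ h => ?_, fun β hβ h => ?_, fun β hβ h => ?_, fun β hβ h => ?_⟩
  · rcases leF_min.1 h with h' | h'
    · exact leF_min.2 (Or.inl (h1.1 β hβ h'))
    · exact leF_min.2 (Or.inr (h2.1 β hβ h'))
  · obtain ⟨ha, hb⟩ := geT_min.1 h
    exact geT_min.2 ⟨h1.2.1 β hβ ha, h2.2.1 β hβ hb⟩
  · rcases leF_min.1 h with h' | h'
    · exact leF_min.2 (Or.inl (h1.2.2.1 β hβ h'))
    · exact leF_min.2 (Or.inr (h2.2.2.1 β hβ h'))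
  · obtain ⟨ha, hb⟩ := geT_min.1 h
    exact geT_min.2 ⟨h1.2.2.2 β hβ ha, h2.2.2.2 β hβ hb⟩

lemma Rel_max {α : Ordinal} {v1 v2 w1 w2 : W} (h1 : Rel α v1 w1) (h2 : Rel α v2 w2) :
    Rel α (max v1 v2) (max w1 w2) := by
  refine ⟨fun β hβ h => ?_, fun β hβ h => ?_, fun β hβ h => ?_, fun β hβ h => ?_⟩
  · obtain ⟨ha, hb⟩ := leF_max.1 h
    exact leF_max.2 ⟨h1.1 β hβ ha, h2.1 β hβ hb⟩
  · rcases geT_max.1 h with h' | h'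
    · exact geT_max.2 (Or.inl (h1.2.1 β hβ h'))
    · exact geT_max.2 (Or.inr (h2.2.1 β hβ h'))
  · obtain ⟨ha, hb⟩ := leF_max.1 h
    exact leF_max.2 ⟨h1.2.2.1 β hβ ha, h2.2.2.1 β hβ hb⟩
  · rcases geT_max.1 h with h' | h'
    · exact geT_max.2 (Or.inl (h1.2.2.2 β hβ h'))
    · exact geT_max.2 (Or.inr (h2.2.2.2 β hβ h'))

lemma leF_neg {v : W} {β : Ordinal} : leF (Wneg v) β ↔ ∃ γ, γ + 1 ≤ β ∧ v.1 = TVPre.T γ := by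
  obtain ⟨v1, hv⟩ := v
  cases v1 <;> simp [Wneg, WT, WF, WZ, leF]

lemma geT_neg {v : W} {β : Ordinal} : geT (Wneg v) β ↔ ∃ γ, γ + 1 ≤ β ∧ v.1 = TVPre.F γ := by
  obtain ⟨v1, hv⟩ := v
  cases v1 <;> simp [Wneg, WT, WF, WZ, geT]

lemma Rel_neg {α : Ordinal} {v w : W} (h : Rel α v w) : Rel α (Wneg v) (Wneg w) := by
  refine ⟨fun β hβ hl => ?_, fun β hβ hl => ?_, fun β hβ hl => ?_, fun β hβ hl => ?_⟩
  · obtain ⟨γ, hγ1, hw⟩ := leF_neg.1 hl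
    have hsucc : γ < γ + 1 := by
      rw [Ordinal.add_one_eq_succ]; exact Order.lt_succ γ
    have hγα : γ < α := lt_of_lt_of_le (lt_of_lt_of_le hsucc hγ1) hβ
    obtain ⟨ε, hε, hv⟩ := h.2.2.2 γ hγα ⟨γ, le_rfl, hw⟩
    exact leF_neg.2 ⟨ε, le_trans (add_le_add_left hε 1) hγ1, hv⟩
  · obtain ⟨γ, hγ1, hv⟩ := geT_neg.1 hl
    have hsucc : γ < γ + 1 := by
      rw [Ordinal.add_one_eq_succ]; exact Order.lt_succ γ
    have hγα : γ < α := lt_of_lt_of_le (lt_of_lt_of_le hsucc hγ1) hβ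
    obtain ⟨ε, hε, hw⟩ := h.2.2.1 γ hγα ⟨γ, le_rfl, hv⟩
    exact geT_neg.2 ⟨ε, le_trans (add_le_add_left hε 1) hγ1, hw⟩
  · obtain ⟨γ, hγ1, hv⟩ := leF_neg.1 hl
    have hsucc : γ < γ + 1 := by
      rw [Ordinal.add_one_eq_succ]; exact Order.lt_succ γ
    have hγα : γ ≤ α := le_of_lt (lt_of_lt_of_le (lt_of_lt_of_le hsucc hγ1) (le_of_lt hβ))
    obtain ⟨ε, hε, hw⟩ := h.2.1 γ hγα ⟨γ, le_rfl, hv⟩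
    exact leF_neg.2 ⟨ε, le_trans (add_le_add_left hε 1) hγ1, hw⟩
  · obtain ⟨γ, hγ1, hw⟩ := geT_neg.1 hl
    have hsucc : γ < γ + 1 := by
      rw [Ordinal.add_one_eq_succ]; exact Order.lt_succ γ
    have hγα : γ ≤ α := le_of_lt (lt_of_lt_of_le (lt_of_lt_of_le hsucc hγ1) (le_of_lt hβ))
    obtain ⟨ε, hε, hv⟩ := h.1 γ hγα ⟨γ, le_rfl, hw⟩
    exact geT_neg.2 ⟨ε, le_trans (add_le_add_left hε 1) hγ1, hv⟩

lemma FIdx_bddAbove (M : Set W) : BddAbove (FIdx M) :=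
  ⟨omega1, fun _ hγ => (mem_lt_omega1_of_FIdx hγ).le⟩

lemma TIdx_bddAbove (M : Set W) : BddAbove (TIdx M) :=
  ⟨omega1, fun _ hγ => (mem_lt_omega1_of_TIdx hγ).le⟩

lemma WZ_mem_iff {M : Set W} {w : W} (hw : w ∈ M) (h : w.1 = TVPre.zero) : WZ ∈ M := by
  have : w = WZ := Subtype.ext h
  rwa [this] at hw

lemma leF_Wsup_of {M : Set W} {β : Ordinal} (hβ : β < omega1)
    (h : ∀ x ∈ M, leF x β) : leF (Wsup M) β := by
  have hT : ¬(TIdx M).Nonempty := by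
    rintro ⟨γ, w, hwM, hw⟩
    obtain ⟨δ, _, h'⟩ := h w hwM
    rw [hw] at h'; exact TVPre.noConfusion h'
  have hZ : WZ ∉ M := fun hz => by
    obtain ⟨δ, _, h'⟩ := h WZ hz
    exact TVPre.noConfusion h'
  have hb : sSup (FIdx M) ≤ β := by
    apply csSup_le'
    rintro γ ⟨w, hwM, hw⟩
    obtain ⟨δ, hδ, h'⟩ := h w hwM
    rw [hw] at h'
    injection h' with e
    exact e ▸ hδ
  rw [Wsup, dif_neg hT, if_neg hZ, dif_pos (lt_of_le_of_lt hb hβ)]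
  exact ⟨sSup (FIdx M), hb, rfl⟩

lemma leF_of_leF_Wsup {M : Set W} {β : Ordinal} (h : leF (Wsup M) β) :
    ∀ x ∈ M, leF x β := by
  obtain ⟨δ, hδ, hWs⟩ := h
  rw [Wsup] at hWs
  split_ifs at hWs with h1 h2 h3
  · exact absurd hWs (by simp [WT])
  · exact absurd hWs (by simp [WZ])
  · intro x hx
    obtain ⟨x1, hxc⟩ := x
    cases x1 with
    | F γ =>
      refine ⟨γ, le_trans ?_ hδ, rfl⟩
      have : γ ∈ FIdx M := ⟨⟨TVPre.F γ, hxc⟩, hx, rfl⟩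
      have := le_csSup (FIdx_bddAbove M) this
      injection hWs with e
      exact e ▸ this
    | zero => exact absurd (WZ_mem_iff hx rfl) h2
    | T γ => exact absurd ⟨γ, ⟨TVPre.T γ, hxc⟩, hx, rfl⟩ h1
  · exact absurd hWs (by simp [WZ])

lemma geT_Wsup_of {M : Set W} {β : Ordinal} (h : ∃ x ∈ M, geT x β) : geT (Wsup M) β := by
  obtain ⟨x, hxM, γ, hγβ, hx⟩ := h
  have hT : (TIdx M).Nonempty := ⟨γ, x, hxM, hx⟩
  rw [Wsup, dif_pos hT]
  exact ⟨sInf (TIdx M), le_trans (csInf_le' ⟨x, hxM, hx⟩) hγβ, rfl⟩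

lemma geT_of_geT_Wsup {M : Set W} {β : Ordinal} (h : geT (Wsup M) β) :
    ∃ x ∈ M, geT x β := by
  obtain ⟨δ, hδ, hWs⟩ := h
  rw [Wsup] at hWs
  split_ifs at hWs with h1 h2 h3
  · obtain ⟨w, hwM, hw⟩ := csInf_mem h1
    injection hWs with e
    exact ⟨w, hwM, sInf (TIdx M), e ▸ hδ, hw⟩
  · exact absurd hWs (by simp [WZ])
  · exact absurd hWs (by simp [WF])
  · exact absurd hWs (by simp [WZ])

lemma geT_Winf_of {M : Set W} {β : Ordinal} (hβ : β < omega1)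
    (h : ∀ x ∈ M, geT x β) : geT (Winf M) β := by
  have hF : ¬(FIdx M).Nonempty := by
    rintro ⟨γ, w, hwM, hw⟩
    obtain ⟨δ, _, h'⟩ := h w hwM
    rw [hw] at h'; exact TVPre.noConfusion h'
  have hZ : WZ ∉ M := fun hz => by
    obtain ⟨δ, _, h'⟩ := h WZ hz
    exact TVPre.noConfusion h'
  have hb : sSup (TIdx M) ≤ β := by
    apply csSup_le'
    rintro γ ⟨w, hwM, hw⟩
    obtain ⟨δ, hδ, h'⟩ := h w hwM
    rw [hw] at h'
    injection h' with e
    exact e ▸ hδ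
  rw [Winf, dif_neg hF, if_neg hZ, dif_pos (lt_of_le_of_lt hb hβ)]
  exact ⟨sSup (TIdx M), hb, rfl⟩

lemma geT_of_geT_Winf {M : Set W} {β : Ordinal} (h : geT (Winf M) β) :
    ∀ x ∈ M, geT x β := by
  obtain ⟨δ, hδ, hWs⟩ := h
  rw [Winf] at hWs
  split_ifs at hWs with h1 h2 h3
  · exact absurd hWs (by simp [WF])
  · exact absurd hWs (by simp [WZ])
  · intro x hx
    obtain ⟨x1, hxc⟩ := x
    cases x1 with
    | F γ => exact absurd ⟨γ, ⟨TVPre.F γ, hxc⟩, hx, rfl⟩ h1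
    | zero => exact absurd (WZ_mem_iff hx rfl) h2
    | T γ =>
      refine ⟨γ, le_trans ?_ hδ, rfl⟩
      have : γ ∈ TIdx M := ⟨⟨TVPre.T γ, hxc⟩, hx, rfl⟩
      have := le_csSup (TIdx_bddAbove M) this
      injection hWs with e
      exact e ▸ this
  · exact absurd hWs (by simp [WZ])

lemma leF_Winf_of {M : Set W} {β : Ordinal} (h : ∃ x ∈ M, leF x β) : leF (Winf M) β := by
  obtain ⟨x, hxM, γ, hγβ, hx⟩ := h
  have hF : (FIdx M).Nonempty := ⟨γ, x, hxM, hx⟩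
  rw [Winf, dif_pos hF]
  exact ⟨sInf (FIdx M), le_trans (csInf_le' ⟨x, hxM, hx⟩) hγβ, rfl⟩

lemma leF_of_leF_Winf {M : Set W} {β : Ordinal} (h : leF (Winf M) β) :
    ∃ x ∈ M, leF x β := by
  obtain ⟨δ, hδ, hWs⟩ := h
  rw [Winf] at hWs
  split_ifs at hWs with h1 h2 h3
  · obtain ⟨w, hwM, hw⟩ := csInf_mem h1
    injection hWs with e
    exact ⟨w, hwM, sInf (FIdx M), e ▸ hδ, hw⟩
  · exact absurd hWs (by simp [WZ])
  · exact absurd hWs (by simp [WT])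
  · exact absurd hWs (by simp [WZ])

lemma Rel_Wsup {α : Ordinal} (hα : α < omega1) {ι : Sort*} {f g : ι → W}
    (hfg : ∀ i, Rel α (f i) (g i)) :
    Rel α (Wsup (Set.range f)) (Wsup (Set.range g)) := by
  refine ⟨fun β hβ h => ?_, fun β hβ h => ?_, fun β hβ h => ?_, fun β hβ h => ?_⟩
  · refine leF_Wsup_of (lt_of_le_of_lt hβ hα) ?_
    rintro x ⟨i, rfl⟩
    exact (hfg i).1 β hβ (leF_of_leF_Wsup h _ ⟨i, rfl⟩)
  · obtain ⟨x, ⟨i, rfl⟩, hx⟩ := geT_of_geT_Wsup h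
    exact geT_Wsup_of ⟨g i, ⟨i, rfl⟩, (hfg i).2.1 β hβ hx⟩
  · refine leF_Wsup_of (lt_of_lt_of_le hβ hα.le) ?_
    rintro x ⟨i, rfl⟩
    exact (hfg i).2.2.1 β hβ (leF_of_leF_Wsup h _ ⟨i, rfl⟩)
  · obtain ⟨x, ⟨i, rfl⟩, hx⟩ := geT_of_geT_Wsup h
    exact geT_Wsup_of ⟨f i, ⟨i, rfl⟩, (hfg i).2.2.2 β hβ hx⟩

lemma Rel_Winf {α : Ordinal} (hα : α < omega1) {ι : Sort*} {f g : ι → W}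
    (hfg : ∀ i, Rel α (f i) (g i)) :
    Rel α (Winf (Set.range f)) (Winf (Set.range g)) := by
  refine ⟨fun β hβ h => ?_, fun β hβ h => ?_, fun β hβ h => ?_, fun β hβ h => ?_⟩
  · obtain ⟨x, ⟨i, rfl⟩, hx⟩ := leF_of_leF_Winf h
    exact leF_Winf_of ⟨f i, ⟨i, rfl⟩, (hfg i).1 β hβ hx⟩
  · refine geT_Winf_of (lt_of_le_of_lt hβ hα) ?_
    rintro x ⟨i, rfl⟩
    exact (hfg i).2.1 β hβ (geT_of_geT_Winf h _ ⟨i, rfl⟩)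
  · obtain ⟨x, ⟨i, rfl⟩, hx⟩ := leF_of_leF_Winf h
    exact leF_Winf_of ⟨g i, ⟨i, rfl⟩, (hfg i).2.2.1 β hβ hx⟩
  · refine geT_Winf_of (lt_of_lt_of_le hβ hα.le) ?_
    rintro x ⟨i, rfl⟩
    exact (hfg i).2.2.2 β hβ (geT_of_geT_Winf h _ ⟨i, rfl⟩)

lemma Rel_eval {L : Language} {α : Ordinal} (hα : α < omega1) {I J : Interp L}
    (hIJ : ∀ A, Rel α (I A) (J A)) (φ : Formula L) :
    ∀ h : ℕ → HU L, Rel α (φ.eval I h) (φ.eval J h) := by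
  induction φ with
  | verum => exact fun h => Rel_refl _
  | falsum => exact fun h => Rel_refl _
  | atom p ts => exact fun h => hIJ _
  | neg φ ih => exact fun h => Rel_neg (ih h)
  | conj φ ψ ihφ ihψ => exact fun h => Rel_min (ihφ h) (ihψ h)
  | disj φ ψ ihφ ihψ => exact fun h => Rel_max (ihφ h) (ihψ h)
  | all v φ ih => exact fun h => Rel_Winf hα fun u => ih (Function.update h v u)
  | ex v φ ih => exact fun h => Rel_Wsup hα fun u => ih (Function.update h v u)

lemma Rel_of_sqa {L : Language} {α : Ordinal} {I J : Interp L} (hIJ : sqa α I J) (A : GroundAtom L) :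
    Rel α (I A) (J A) := by
  refine ⟨fun β hβ h => ?_, fun β hβ h => ?_, fun β hβ h => ?_, fun β hβ h => ?_⟩
  · obtain ⟨γ, hγβ, hJ⟩ := h
    rcases lt_or_eq_of_le (le_trans hγβ hβ) with hγα | rfl
    · have := ((hIJ.1 γ hγα) γ le_rfl).1
      exact ⟨γ, hγβ, (Set.ext_iff.1 this A).2 hJ⟩
    · exact ⟨γ, hγβ, hIJ.2.1 hJ⟩
  · obtain ⟨γ, hγβ, hI⟩ := h
    rcases lt_or_eq_of_le (le_trans hγβ hβ) with hγα | rfl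
    · have := ((hIJ.1 γ hγα) γ le_rfl).2
      exact ⟨γ, hγβ, (Set.ext_iff.1 this A).1 hI⟩
    · exact ⟨γ, hγβ, hIJ.2.2 hI⟩
  · obtain ⟨γ, hγβ, hI⟩ := h
    have := ((hIJ.1 γ (lt_of_le_of_lt hγβ hβ)) γ le_rfl).1
    exact ⟨γ, hγβ, (Set.ext_iff.1 this A).1 hI⟩
  · obtain ⟨γ, hγβ, hJ⟩ := h
    have := ((hIJ.1 γ (lt_of_le_of_lt hγβ hβ)) γ le_rfl).2
    exact ⟨γ, hγβ, (Set.ext_iff.1 this A).2 hJ⟩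

lemma Rel.F_iff {α β : Ordinal} {v w : W} (h : Rel α v w) (hβ : β < α) :
    v.1 = TVPre.F β ↔ w.1 = TVPre.F β := by
  constructor
  · intro hv
    obtain ⟨γ, hγβ, hw⟩ := h.2.2.1 β hβ ⟨β, le_rfl, hv⟩
    rcases lt_or_eq_of_le hγβ with hlt | rfl
    · obtain ⟨δ, hδγ, hv'⟩ := h.1 γ (le_of_lt (lt_trans hlt hβ)) ⟨γ, le_rfl, hw⟩
      rw [hv] at hv'
      injection hv' with e
      exact absurd (e ▸ hδγ) (not_le_of_gt hlt)
    · exact hw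
  · intro hw
    obtain ⟨γ, hγβ, hv⟩ := h.1 β hβ.le ⟨β, le_rfl, hw⟩
    rcases lt_or_eq_of_le hγβ with hlt | rfl
    · obtain ⟨δ, hδγ, hw'⟩ := h.2.2.1 γ (lt_trans hlt hβ) ⟨γ, le_rfl, hv⟩
      rw [hw] at hw'
      injection hw' with e
      exact absurd (e ▸ hδγ) (not_le_of_gt hlt)
    · exact hv

lemma Rel.T_iff {α β : Ordinal} {v w : W} (h : Rel α v w) (hβ : β < α) :
    v.1 = TVPre.T β ↔ w.1 = TVPre.T β := by
  constructor
  · intro hv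
    obtain ⟨γ, hγβ, hw⟩ := h.2.1 β hβ.le ⟨β, le_rfl, hv⟩
    rcases lt_or_eq_of_le hγβ with hlt | rfl
    · obtain ⟨δ, hδγ, hv'⟩ := h.2.2.2 γ (lt_trans hlt hβ) ⟨γ, le_rfl, hw⟩
      rw [hv] at hv'
      injection hv' with e
      exact absurd (e ▸ hδγ) (not_le_of_gt hlt)
    · exact hw
  · intro hw
    obtain ⟨γ, hγβ, hv⟩ := h.2.2.2 β hβ ⟨β, le_rfl, hw⟩
    rcases lt_or_eq_of_le hγβ with hlt | rfl
    · obtain ⟨δ, hδγ, hw'⟩ := h.2.1 γ (le_of_lt (lt_trans hlt hβ)) ⟨γ, le_rfl, hv⟩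
      rw [hw] at hw'
      injection hw' with e
      exact absurd (e ▸ hδγ) (not_le_of_gt hlt)
    · exact hv

lemma Rel.F_top {α : Ordinal} {v w : W} (h : Rel α v w) (hw : w.1 = TVPre.F α) :
    v.1 = TVPre.F α := by
  obtain ⟨γ, hγα, hv⟩ := h.1 α le_rfl ⟨α, le_rfl, hw⟩
  rcases lt_or_eq_of_le hγα with hlt | rfl
  · obtain ⟨δ, hδγ, hw'⟩ := h.2.2.1 γ hlt ⟨γ, le_rfl, hv⟩
    rw [hw] at hw'
    injection hw' with e
    exact absurd (e ▸ hδγ) (not_le_of_gt hlt)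
  · exact hv

lemma Rel.T_top {α : Ordinal} {v w : W} (h : Rel α v w) (hv : v.1 = TVPre.T α) :
    w.1 = TVPre.T α := by
  obtain ⟨γ, hγα, hw⟩ := h.2.1 α le_rfl ⟨α, le_rfl, hv⟩
  rcases lt_or_eq_of_le hγα with hlt | rfl
  · obtain ⟨δ, hδγ, hv'⟩ := h.2.2.2 γ hlt ⟨γ, le_rfl, hw⟩
    rw [hv] at hv'
    injection hv' with e
    exact absurd (e ▸ hδγ) (not_le_of_gt hlt)
  · exact hw

lemma TP_eq_range {L : Language} (P : Program L) (K : Interp L) (A : GroundAtom L) :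
    TP P K A = Wsup (Set.range fun φ : {φ : Formula L // (A, φ) ∈ groundInstances P} =>
      Formula.evalClosed K φ.1) := by
  simp only [TP]
  congr 1
  ext w
  constructor
  · rintro ⟨φ, hc, rfl⟩; exact ⟨⟨φ, hc⟩, rfl⟩
  · rintro ⟨⟨φ, hc⟩, rfl⟩; exact ⟨φ, hc, rfl⟩

/-- the immediate consequence operator is `α`-monotonic. -/
theorem TP_alpha_monotonic {L : Language} (P : Program L) (α : Ordinal)
    (hα : α < omega1) (I J : Interp L) (hIJ : sqa α I J) :
    sqa α (TP P I) (TP P J) := by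
  have hA := Rel_of_sqa hIJ
  have hTP : ∀ A, Rel α (TP P I A) (TP P J A) := by
    intro A
    rw [TP_eq_range P I A, TP_eq_range P J A]
    exact Rel_Wsup hα fun φ => Rel_eval hα hA φ.1 (defaultAssignment L)
  exact ⟨fun β hβ ζ hζ =>
      ⟨Set.ext fun A => (hTP A).F_iff (lt_of_le_of_lt hζ hβ),
       Set.ext fun A => (hTP A).T_iff (lt_of_le_of_lt hζ hβ)⟩,
    fun A hA => (hTP A).F_top hA,
    fun A hA => (hTP A).T_top hA⟩

end ILP
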